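/- With r*_ξ = r_{α_m} ∘ ⋯ ∘ r_{α₀} and s*_ξ = s_{α₀} ∘ ⋯ ∘ s_{α_m} for ξ = ω^{α₀} + ⋯ + ω^{α_m} (α₀ ≥ ⋯ ≥ α_m), the composition r*_ξ ∘ s*_ξ is the identity on iterated Q-labeled trees; in particular (s*_ξ, r*_ξ) is a section–retraction pair for the homomorphism quasi-order. -/

import Mathlib

open Ordinal

/-- Terms of the iterated `Q`-labeled forest structure `𝒯^⊔_{ω₁}(Q)`:
constants `q ∈ Q`, singleton terms `s_α(T)`, tree terms `A·B` (singleton `·` forest),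
and forest terms `⊔_i T_i` (countable disjoint unions, encoded as `ℕ`-indexed
families). -/
inductive ITerm (Q : Type) : Type 1 where
  | const : Q → ITerm Q
  | s : Ordinal.{0} → ITerm Q → ITerm Q
  | dot : ITerm Q → (ℕ → ITerm Q) → ITerm Q
  | sup : (ℕ → ITerm Q) → ITerm Q

/-- Singleton terms: constants and `s_α`-terms. -/
def ITerm.IsSng {Q : Type} : ITerm Q → Prop
  | .const _ => True
  | .s _ _ => True
  | _ => False

/-- The homomorphism quasi-order `≤_h` on iterated terms, defined recursively by:
`q ≤_h q'` iff `q ≤_Q q'`; `p ≡_h s_α(p)` for `p ∈ Q`;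
`s_α(U) ≤_h s_β(V)` iff `U ≤_h V` (`α = β`), iff `s_α(U) ≤_h V` (`α > β`),
iff `U ≤_h s_β(V)` (`α < β`); `A·B ≤_h C·D` iff (`A ≤_h C` and `B ≤_h C·D`) or
`A·B ≤_h D_i` for some `i`; `⊔_i B_i ≤_h T` iff all `B_i ≤_h T`; a non-forest term
is `≤_h ⊔_i D_i` iff it is `≤_h D_i` for some `i`; a tree `A·B` is below a
singleton `S` iff `A` and all trees of `B` are; a singleton `S ≤_h C·D` iff
`S ≤_h C` or `S ≤_h D_i` for some `i`. -/
inductive HLe {Q : Type} (le : Q → Q → Prop) : ITerm Q → ITerm Q → Prop where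
  | const {p q : Q} : le p q → HLe le (.const p) (.const q)
  | const_s_left {p : Q} {α : Ordinal.{0}} {V : ITerm Q} :
      HLe le (.const p) V → HLe le (.s α (.const p)) V
  | const_s_right {p : Q} {α : Ordinal.{0}} {U : ITerm Q} :
      HLe le U (.const p) → HLe le U (.s α (.const p))
  | s_eq {α : Ordinal.{0}} {U V : ITerm Q} :
      HLe le U V → HLe le (.s α U) (.s α V)
  | s_gt {α β : Ordinal.{0}} {U V : ITerm Q} : β < α →
      HLe le (.s α U) V → HLe le (.s α U) (.s β V)
  | s_lt {α β : Ordinal.{0}} {U V : ITerm Q} : α < β →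
      HLe le U (.s β V) → HLe le (.s α U) (.s β V)
  | dot_dot {A C : ITerm Q} {B D : ℕ → ITerm Q} :
      HLe le A C → (∀ n, HLe le (B n) (.dot C D)) →
      HLe le (.dot A B) (.dot C D)
  | dot_drop {A C : ITerm Q} {B D : ℕ → ITerm Q} {n : ℕ} :
      HLe le (.dot A B) (D n) → HLe le (.dot A B) (.dot C D)
  | sup_le {B : ℕ → ITerm Q} {T : ITerm Q} :
      (∀ n, HLe le (B n) T) → HLe le (.sup B) T
  | le_sup {D : ℕ → ITerm Q} {T : ITerm Q} {n : ℕ} :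
      HLe le T (D n) → HLe le T (.sup D)
  | dot_sng {S A : ITerm Q} {B : ℕ → ITerm Q} : S.IsSng →
      HLe le A S → (∀ n, HLe le (B n) S) → HLe le (.dot A B) S
  | sng_dot {S C : ITerm Q} {D : ℕ → ITerm Q} : S.IsSng →
      HLe le S C → HLe le S (.dot C D)
  | sng_dot_drop {S C : ITerm Q} {D : ℕ → ITerm Q} {n : ℕ} : S.IsSng →
      HLe le S (D n) → HLe le S (.dot C D)

/-- `s*_ξ = s_{α₀} ∘ ⋯ ∘ s_{α_m}` for the Cantor normal form
`ξ = ω^{α₀} + ⋯ + ω^{α_m}` (`α₀ ≥ ⋯ ≥ α_m`), given by the list `[α₀, …, α_m]`;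
for `ξ = 0` (the empty list) it is the identity. -/
def sStar {Q : Type} (L : List Ordinal.{0}) (T : ITerm Q) : ITerm Q :=
  L.foldr (fun α t => ITerm.s α t) T

/-- The retraction `r_α` on iterated `Q`-labeled forests. -/
noncomputable def rA {Q : Type} (α : Ordinal.{0}) : ITerm Q → ITerm Q
  | .const q => .const q
  | .s β T => if β < α then rA α T else if β = α then T else .s β T
  | .dot T V => .sup (fun n => match n with
      | 0 => rA α T
      | m + 1 => rA α (V m))
  | .sup F => .sup (fun n => rA α (F n))
  termination_by structural t => t

/-- `r*_ξ = r_{α_m} ∘ ⋯ ∘ r_{α₀}`. -/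
noncomputable def rStar {Q : Type} (L : List Ordinal.{0}) (T : ITerm Q) : ITerm Q :=
  L.foldl (fun t α => rA α t) T

/-- With `r*_ξ = r_{α_m} ∘ ⋯ ∘ r_{α₀}` and `s*_ξ = s_{α₀} ∘ ⋯ ∘ s_{α_m}` for
`ξ = ω^{α₀} + ⋯ + ω^{α_m}` (`α₀ ≥ ⋯ ≥ α_m`, given by the list `[α₀, …, α_m]`),
the composition `r*_ξ ∘ s*_ξ` is the identity on iterated `Q`-labeled trees;
in particular, since `s*_ξ` and `r*_ξ` are monotone for `≤_h`,
`(s*_ξ, r*_ξ)` is a section–retraction pair for the homomorphism quasi-order. -/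

lemma rA_s_self {Q : Type} (a : Ordinal.{0}) (T : ITerm Q) :
    rA a (ITerm.s a T) = T := by
  simp [rA]

lemma rA_s_of_lt {Q : Type} {x c : Ordinal.{0}} (h : c < x) (T : ITerm Q) :
    rA x (ITerm.s c T) = rA x T := by simp [rA, h]

lemma rA_s_of_gt {Q : Type} {x c : Ordinal.{0}} (h : x < c) (T : ITerm Q) :
    rA x (ITerm.s c T) = ITerm.s c T := by simp [rA, asymm h, h.ne']

lemma rA_mono {Q : Type} {le : Q -> Q -> Prop} (x : Ordinal.{0})
    {T V : ITerm Q} (h : HLe le T V) : HLe le (rA x T) (rA x V) := by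
  induction h with
  | @const p q h => simpa [rA] using HLe.const h
  | @const_s_left p b V h ih =>
      simp only [rA]
      split_ifs with h1 h2
      · simpa [rA] using ih
      · simpa [rA] using ih
      · exact HLe.const_s_left (by simpa [rA] using ih)
  | @const_s_right p b U h ih =>
      simp only [rA]
      split_ifs with h1 h2
      · simpa [rA] using ih
      · simpa [rA] using ih
      · exact HLe.const_s_right (by simpa [rA] using ih)
  | @s_eq b U V h ih =>
      simp only [rA]
      split_ifs with h1 h2
      · exact ih
      · exact h
      · exact HLe.s_eq h
  | @s_gt a b U V hba h ih =>
      rcases lt_trichotomy b x with h1 | h1 | h1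
      · rw [rA_s_of_lt h1]; exact ih
      · subst h1
        rw [rA_s_self, rA_s_of_gt hba]; exact h
      · rw [rA_s_of_gt h1, rA_s_of_gt (h1.trans hba)]
        exact HLe.s_gt hba h
  | @s_lt a b U V hab h ih =>
      rcases lt_trichotomy a x with h1 | h1 | h1
      · rw [rA_s_of_lt h1]; exact ih
      · subst h1
        rw [rA_s_self, rA_s_of_gt hab]; exact h
      · rw [rA_s_of_gt h1, rA_s_of_gt (h1.trans hab)]
        exact HLe.s_lt hab h
  | @dot_dot A C B D h1 h2 ih1 ih2 =>
      simp only [rA]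
      refine HLe.sup_le (fun n => ?_)
      rcases n with _ | m
      · exact HLe.le_sup (n := 0) ih1
      · simpa [rA] using ih2 m
  | @dot_drop A C B D n h ih =>
      simp only [rA]
      exact HLe.le_sup (n := n + 1) (by simpa [rA] using ih)
  | @sup_le B T h ih =>
      simp only [rA]
      exact HLe.sup_le ih
  | @le_sup D T n h ih =>
      simp only [rA]
      exact HLe.le_sup (n := n) ih
  | @dot_sng S A B hS h1 h2 ih1 ih2 =>
      simp only [rA]
      refine HLe.sup_le (fun n => ?_)
      rcases n with _ | m
      · exact ih1
      · exact ih2 m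
  | @sng_dot S C D hS h ih =>
      simp only [rA]
      exact HLe.le_sup (n := 0) ih
  | @sng_dot_drop S C D n hS h ih =>
      simp only [rA]
      exact HLe.le_sup (n := n + 1) ih

theorem rStar_sStar_section_retraction {Q : Type} (le : Q → Q → Prop)
    (hrefl : ∀ q, le q q) (htrans : ∀ a b c, le a b → le b c → le a c)
    (L : List Ordinal.{0}) (hL : L.Pairwise (· ≥ ·))
    (ξ : Ordinal.{0}) (hξ : ξ = (L.map (fun α => Ordinal.omega0 ^ α)).sum) :
    (∀ T : ITerm Q, rStar L (sStar L T) = T) ∧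
    (∀ T V : ITerm Q, HLe le T V → HLe le (sStar L T) (sStar L V)) ∧
    (∀ T V : ITerm Q, HLe le T V → HLe le (rStar L T) (rStar L V)) := by
  refine ⟨?_, ?_, ?_⟩
  · intro T
    clear hL hξ
    induction L with
    | nil => rfl
    | cons a l ih =>
        show rStar l (rA a (ITerm.s a (sStar l T))) = T
        rw [rA_s_self]; exact ih
  · intro T V h
    clear hL hξ
    induction L with
    | nil => exact h
    | cons a l ih => exact HLe.s_eq ih
  · intro T V h
    clear hL hξ
    induction L generalizing T V with
    | nil => exact h
    | cons a l ih => exact ih _ _ (rA_mono a h)
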